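/- Assume that 1 − T : M → M is invertible. Then the homomorphism φ : Adj(A(M,T)) → F(M,T) with φ(e_x) = (1, x, 0) is a group isomorphism; in particular the groups Adj(A(M,T)) and F(M,T) are isomorphic. -/

import Mathlib

/-!
Common setup: the adjoint group of the Alexander quandle `A(M,T)` (F.J.-B.J. Clauwens,
"The adjoint group of an Alexander quandle").

For an abelian group `M` with automorphism `T`, the Alexander quandle `A(M,T)` is `M` with
`y * x = T y + x - T x`, and the adjoint group `Adj(A(M,T))` is presented with generators
`e x` for `x : M` and relations `e (y * x) = (e x)⁻¹ * e y * e x`.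
-/

open scoped TensorProduct

namespace Clauwens

variable {M : Type*} [AddCommGroup M]

/-- The relations of the adjoint group of the Alexander quandle `A(M,T)`:
for each `x y : M`, the relation `e_{y*x} = e_x⁻¹ * e_y * e_x`, where `y*x = T y + x - T x`. -/
def rels (T : M ≃+ M) : Set (FreeGroup M) :=
  {r | ∃ x y : M, r = FreeGroup.of (T y + x - T x) *
      ((FreeGroup.of x)⁻¹ * FreeGroup.of y * FreeGroup.of x)⁻¹}

/-- The adjoint group `Adj(A(M,T))` of the Alexander quandle. -/
abbrev Adj (T : M ≃+ M) : Type _ := PresentedGroup (rels T)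

/-- The generator `e_x` of the adjoint group. -/
def e (T : M ≃+ M) (x : M) : Adj T := PresentedGroup.of x

/-- The quandle automorphism `p ↦ p * x = T p + x - T x` of `A(M,T)`. -/
def σ (T : M ≃+ M) (x : M) : Equiv.Perm M where
  toFun p := T p + (x - T x)
  invFun p := T.symm (p - (x - T x))
  left_inv p := by simp
  right_inv p := by simp

lemma σ_apply (T : M ≃+ M) (x p : M) : σ T x p = T p + (x - T x) := rfl

lemma σ_inv_apply (T : M ≃+ M) (x p : M) : (σ T x)⁻¹ p = T.symm (p - (x - T x)) := rfl

lemma σ_rel (T : M ≃+ M) (x y : M) :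
    σ T x * σ T y * (σ T x)⁻¹ = σ T (T y + x - T x) := by
  ext p
  simp only [Equiv.Perm.mul_apply, σ_apply, σ_inv_apply, map_add, map_sub,
    AddEquiv.apply_symm_apply]
  abel

/-- The homomorphism `ρ` from the adjoint group to the group of quandle automorphisms of
`A(M,T)` acting on the right of `M` (hence the `ᵐᵒᵖ`), induced by the right action
`p · e_x = p * x = T p + x - T x`; the automorphism by which `g` acts is `(ρ T g).unop`. -/
def ρ (T : M ≃+ M) : Adj T →* (Equiv.Perm M)ᵐᵒᵖ :=
  PresentedGroup.toGroup (f := fun x => MulOpposite.op (σ T x)) (by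
    rintro r ⟨x, y, rfl⟩
    simp only [map_mul, map_inv, FreeGroup.lift_apply_of, ← MulOpposite.op_inv, ← MulOpposite.op_mul,
      mul_inv_rev, inv_inv]
    rw [MulOpposite.op_eq_one_iff, ← σ_rel T x y]
    group)

/-- `γ(x,y) = e_0⁻¹ e_{x+y} e_y⁻¹ e_0 e_x⁻¹ e_0`, so that
`e_0⁻¹ e_{x+y} = γ(x,y) e_0⁻¹ e_x e_0⁻¹ e_y`. -/
def γ (T : M ≃+ M) (x y : M) : Adj T :=
  (e T 0)⁻¹ * e T (x + y) * (e T y)⁻¹ * e T 0 * (e T x)⁻¹ * e T 0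

/-- `λ(x,y) = γ(y,x)⁻¹ γ(x,y)`. -/
def lam (T : M ≃+ M) (x y : M) : Adj T := (γ T y x)⁻¹ * γ T x y

/-- The additive endomorphism `τ` of `M ⊗_ℤ M` with `τ(x ⊗ y) = T y ⊗ x`. -/
noncomputable def τmap (T : M ≃+ M) : M ⊗[ℤ] M →ₗ[ℤ] M ⊗[ℤ] M :=
  (TensorProduct.comm ℤ M M).toLinearMap ∘ₗ
    (LinearMap.lTensor M T.toAddMonoidHom.toIntLinearMap)

lemma τmap_tmul (T : M ≃+ M) (x y : M) : τmap T (x ⊗ₜ[ℤ] y) = T y ⊗ₜ[ℤ] x := rfl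

/-- `S(M,T) = coker(1 - τ) = (M ⊗_ℤ M)/im(1 - τ)`. -/
abbrev S (T : M ≃+ M) : Type _ :=
  (M ⊗[ℤ] M) ⧸ LinearMap.range (LinearMap.id - τmap T)

/-- The class `[x ⊗ y]` in `S(M,T)`. -/
noncomputable def cls (T : M ≃+ M) (x y : M) : S T := Submodule.Quotient.mk (x ⊗ₜ[ℤ] y)

lemma mk_τmap (T : M ≃+ M) (w : M ⊗[ℤ] M) :
    (Submodule.Quotient.mk (τmap T w) : S T) = Submodule.Quotient.mk w := by
  rw [Submodule.Quotient.eq]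
  exact ⟨-w, by simp [LinearMap.sub_apply]; abel⟩

lemma cls_T (T : M ≃+ M) (x y : M) : cls T (T x) (T y) = cls T x y := by
  have h1 : cls T (T x) (T y) = Submodule.Quotient.mk (τmap T (T y ⊗ₜ[ℤ] x)) := rfl
  have h2 : (Submodule.Quotient.mk (T y ⊗ₜ[ℤ] x) : S T)
      = Submodule.Quotient.mk (τmap T (x ⊗ₜ[ℤ] y)) := rfl
  rw [h1, mk_τmap, h2, mk_τmap]; rfl

lemma cls_add_left (T : M ≃+ M) (x x' y : M) :
    cls T (x + x') y = cls T x y + cls T x' y := by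
  simp only [cls, ← Submodule.Quotient.mk_add, TensorProduct.add_tmul]

lemma cls_add_right (T : M ≃+ M) (x y y' : M) :
    cls T x (y + y') = cls T x y + cls T x y' := by
  simp only [cls, ← Submodule.Quotient.mk_add, TensorProduct.tmul_add]

lemma cls_neg_left (T : M ≃+ M) (x y : M) : cls T (-x) y = -cls T x y := by
  simp only [cls, ← Submodule.Quotient.mk_neg, TensorProduct.neg_tmul]

lemma cls_zero_left (T : M ≃+ M) (y : M) : cls T 0 y = 0 := by
  simp [cls, TensorProduct.zero_tmul]

lemma cls_zero_right (T : M ≃+ M) (x : M) : cls T x 0 = 0 := by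
  simp [cls, TensorProduct.tmul_zero]

/-- `T^m` for `m : ℤ`. -/
def Tz (T : M ≃+ M) (m : ℤ) : M ≃+ M := (m • T : AddAut M)

lemma Tz_zero (T : M ≃+ M) (x : M) : Tz T 0 x = x := rfl

lemma Tz_one (T : M ≃+ M) (x : M) : Tz T 1 x = T x := by simp [Tz]

lemma Tz_add (T : M ≃+ M) (m n : ℤ) (x : M) : Tz T (m + n) x = Tz T m (Tz T n x) := by
  simp [Tz, add_zsmul, AddAut.add_apply]

lemma cls_Tz_shift (T : M ≃+ M) (m : ℤ) (x y : M) :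
    cls T (Tz T (m + 1) x) (Tz T (m + 1) y) = cls T (Tz T m x) (Tz T m y) := by
  have h : ∀ z : M, Tz T (m + 1) z = T (Tz T m z) := by
    intro z; rw [add_comm, Tz_add, Tz_one]
  rw [h, h, cls_T]

lemma cls_Tz (T : M ≃+ M) (m : ℤ) (x y : M) :
    cls T (Tz T m x) (Tz T m y) = cls T x y := by
  induction m using Int.induction_on with
  | zero => rfl
  | succ i ih => rw [cls_Tz_shift, ih]
  | pred i ih =>
      have h := cls_Tz_shift T (-(i : ℤ) - 1) x y
      rw [sub_add_cancel] at h
      rw [← h, ih]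

/-- `F(M,T)` is the set `ℤ × M × S(M,T)` equipped with the multiplication
`(k, x, α)(m, y, β) = (k + m, T^m x + y, α + β + [T^m x ⊗ y])`. -/
abbrev F (T : M ≃+ M) : Type _ := ℤ × M × S T

noncomputable instance (T : M ≃+ M) : Group (F T) where
  mul g h := (g.1 + h.1, Tz T h.1 g.2.1 + h.2.1, g.2.2 + h.2.2 + cls T (Tz T h.1 g.2.1) h.2.1)
  one := ((0 : ℤ), (0 : M), (0 : S T))
  inv g := (-g.1, -(Tz T (-g.1) g.2.1), -g.2.2 + cls T g.2.1 g.2.1)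
  mul_assoc g h k := by
    obtain ⟨a, x, α⟩ := g; obtain ⟨b, y, β⟩ := h; obtain ⟨c, z, δ⟩ := k
    refine Prod.ext (add_assoc a b c) (Prod.ext ?_ ?_)
    · show Tz T c (Tz T b x + y) + z = Tz T (b + c) x + (Tz T c y + z)
      rw [add_comm b c, Tz_add, map_add]
      abel
    · show α + β + cls T (Tz T b x) y + δ + cls T (Tz T c (Tz T b x + y)) z
        = α + (β + δ + cls T (Tz T c y) z) + cls T (Tz T (b + c) x) (Tz T c y + z)
      rw [add_comm b c, Tz_add, map_add, cls_add_left, cls_add_right]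
      have h1 : cls T (Tz T c (Tz T b x)) (Tz T c y) = cls T (Tz T b x) y := cls_Tz T c _ _
      rw [h1]
      abel
  one_mul g := by
    obtain ⟨a, x, α⟩ := g
    refine Prod.ext (zero_add a) (Prod.ext ?_ ?_)
    · show Tz T a 0 + x = x
      rw [map_zero, zero_add]
    · show 0 + α + cls T (Tz T a 0) x = α
      rw [map_zero, cls_zero_left, zero_add, add_zero]
  mul_one g := by
    obtain ⟨a, x, α⟩ := g
    refine Prod.ext (add_zero a) (Prod.ext ?_ ?_)
    · show Tz T 0 x + 0 = x
      rw [Tz_zero, add_zero]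
    · show α + 0 + cls T (Tz T 0 x) 0 = α
      rw [cls_zero_right, add_zero, add_zero]
  inv_mul_cancel g := by
    obtain ⟨a, x, α⟩ := g
    have hx : Tz T a (Tz T (-a) x) = x := by
      rw [← Tz_add, add_neg_cancel, Tz_zero]
    refine Prod.ext (neg_add_cancel a) (Prod.ext ?_ ?_)
    · show Tz T a (-(Tz T (-a) x)) + x = 0
      rw [map_neg, hx, neg_add_cancel]
    · show -α + cls T x x + α + cls T (Tz T a (-(Tz T (-a) x))) x = 0
      rw [map_neg, hx, cls_neg_left]
      abel

/-- The canonical augmentation `ε : Adj(A(M,T)) → ℤ`, with `ε(e_x) = 1` for all `x`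
(written multiplicatively since `Adj` is a multiplicative group). -/
def ε (T : M ≃+ M) : Adj T →* Multiplicative ℤ :=
  PresentedGroup.toGroup (f := fun _ => Multiplicative.ofAdd (1 : ℤ)) (by
    rintro r ⟨x, y, rfl⟩
    simp only [map_mul, map_inv, FreeGroup.lift_apply_of]
    group)

/-- The subgroup `F(M,T)⁰` of elements `(0, x, α)` of `F(M,T)`. -/
noncomputable def Fo (T : M ≃+ M) : Subgroup (F T) where
  carrier := {g | g.1 = 0}
  mul_mem' := by
    rintro ⟨a, x, α⟩ ⟨b, y, β⟩ (ha : a = 0) (hb : b = 0)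
    show a + b = 0
    rw [ha, hb, add_zero]
  one_mem' := rfl
  inv_mem' := by
    rintro ⟨a, x, α⟩ (ha : a = 0)
    show -a = 0
    rw [ha, neg_zero]

/-- The fundamental group `π₁(A(M,T), 0)` of the Alexander quandle based at `0 ∈ M`:
the elements of `ker ε` fixing the base point `0`. -/
def pi1 (T : M ≃+ M) : Subgroup (Adj T) where
  carrier := {g | g ∈ (ε T).ker ∧ (ρ T g).unop 0 = 0}
  one_mem' := ⟨(ε T).ker.one_mem, by simp⟩
  mul_mem' := by
    intro a b ha hb
    refine ⟨(ε T).ker.mul_mem ha.1 hb.1, ?_⟩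
    show ((ρ T) (a * b)).unop 0 = 0
    rw [map_mul, MulOpposite.unop_mul, Equiv.Perm.mul_apply, ha.2, hb.2]
  inv_mem' := by
    intro a ha
    refine ⟨(ε T).ker.inv_mem ha.1, ?_⟩
    show ((ρ T) a⁻¹).unop 0 = 0
    rw [map_inv, MulOpposite.unop_inv]
    exact Equiv.Perm.inv_eq_iff_eq.mpr ha.2.symm


-- Development part, to be inserted before statement12.
section Proof12

variable (T : M ≃+ M)

/-! ### Basic relations in the adjoint group -/

lemma e_def (x : M) : e T x = PresentedGroup.mk (rels T) (FreeGroup.of x) := rfl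

lemma rel_e (x y : M) :
    e T (T y + x - T x) = (e T x)⁻¹ * e T y * e T x := by
  have h : (PresentedGroup.mk (rels T)) (FreeGroup.of (T y + x - T x) *
      ((FreeGroup.of x)⁻¹ * FreeGroup.of y * FreeGroup.of x)⁻¹) = 1 := by
    apply (QuotientGroup.eq_one_iff _).mpr
    exact Subgroup.subset_normalClosure ⟨x, y, rfl⟩
  simp only [map_mul, map_inv] at h
  rw [mul_inv_eq_one] at h
  simpa [e_def] using h

lemma rel_mul (x y : M) :
    e T y * e T x = e T x * e T (T y + x - T x) := by
  rw [rel_e]; group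

/-- `a x = (e 0)⁻¹ * e x`. -/
def aA (x : M) : Adj T := (e T 0)⁻¹ * e T x

lemma aA_zero : aA T 0 = 1 := by simp [aA]

lemma e_eq_w_aA (x : M) : e T x = e T 0 * aA T x := by
  simp [aA]

lemma conj_w (p : M) : (e T 0)⁻¹ * e T p = e T (T p) * (e T 0)⁻¹ := by
  have h := rel_e T 0 p
  simp only [map_zero, add_zero, sub_zero] at h
  rw [h]; group

/-- relation (A'): `a y * a t = a (T t) * a (y + t - T t)`. -/
lemma arel (y t : M) :
    aA T y * aA T t = aA T (T t) * aA T (y + t - T t) := by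
  have h3 : T (y + t - T t) = T y + T t - T (T t) := by
    rw [map_sub, map_add]
  calc aA T y * aA T t
      = (e T 0)⁻¹ * (e T y * e T (T t)) * (e T 0)⁻¹ := by
        rw [aA, aA, mul_assoc, conj_w]; group
    _ = (e T 0)⁻¹ * (e T (T t) * e T (T y + T t - T (T t))) * (e T 0)⁻¹ := by
        rw [rel_mul]
    _ = aA T (T t) * aA T (y + t - T t) := by
        rw [aA, aA, conj_w T (y + t - T t), h3]; group

lemma asplit (u : M) : aA T u = aA T (T u) * aA T (u - T u) := by
  have h := arel T 0 u
  simpa [aA_zero] using h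

/-- conjugation of `a p` by `a (T u)`. -/
lemma conj_aA (p u : M) :
    (aA T (T u))⁻¹ * aA T p * aA T (T u)
      = aA T (p + (u - T u)) * (aA T (u - T u))⁻¹ := by
  have h1 := arel T p u
  have h2 := asplit T u
  -- a p * a u = a (Tu) * a (p + su);  a u = a(Tu) * a(su)
  -- so a p * a(Tu) * a(su) = a(Tu) * a(p+su)
  have h3 : aA T p * (aA T (T u) * aA T (u - T u)) =
      aA T (T u) * aA T (p + u - T u) := by rw [← h2, h1]
  have h4 : p + u - T u = p + (u - T u) := by abel
  rw [h4] at h3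
  calc (aA T (T u))⁻¹ * aA T p * aA T (T u)
      = (aA T (T u))⁻¹ * (aA T p * (aA T (T u) * aA T (u - T u)))
          * (aA T (u - T u))⁻¹ := by group
    _ = (aA T (T u))⁻¹ * (aA T (T u) * aA T (p + (u - T u)))
          * (aA T (u - T u))⁻¹ := by rw [h3]
    _ = aA T (p + (u - T u)) * (aA T (u - T u))⁻¹ := by group

/-- conjugation of `a p` by `a (T u) * a (T v)`. -/
lemma conj_aA2 (p u v : M) :
    (aA T (T u) * aA T (T v))⁻¹ * aA T p * (aA T (T u) * aA T (T v))
      = aA T (p + ((u - T u) + (v - T v)))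
        * (aA T ((u - T u) + (v - T v)))⁻¹ := by
  have h1 := conj_aA T p u
  have key : ∀ q, (aA T (T v))⁻¹ * aA T q * aA T (T v)
      = aA T (q + (v - T v)) * (aA T (v - T v))⁻¹ := fun q => conj_aA T q v
  calc (aA T (T u) * aA T (T v))⁻¹ * aA T p * (aA T (T u) * aA T (T v))
      = (aA T (T v))⁻¹ * ((aA T (T u))⁻¹ * aA T p * aA T (T u)) * aA T (T v) := by
        group
    _ = (aA T (T v))⁻¹ * (aA T (p + (u - T u)) * (aA T (u - T u))⁻¹) * aA T (T v) := by
        rw [h1]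
    _ = ((aA T (T v))⁻¹ * aA T (p + (u - T u)) * aA T (T v)) *
        ((aA T (T v))⁻¹ * aA T (u - T u) * aA T (T v))⁻¹ := by group
    _ = (aA T (p + (u - T u) + (v - T v)) * (aA T (v - T v))⁻¹) *
        (aA T ((u - T u) + (v - T v)) * (aA T (v - T v))⁻¹)⁻¹ := by
        rw [key, key]
    _ = aA T (p + ((u - T u) + (v - T v)))
        * (aA T ((u - T u) + (v - T v)))⁻¹ := by
        rw [show p + (u - T u) + (v - T v) = p + ((u - T u) + (v - T v)) by abel]
        group

/-- `gam x y = a (x+y) * (a x * a y)⁻¹`, equal to the file's `γ`. -/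
def gam (x y : M) : Adj T := aA T (x + y) * (aA T x * aA T y)⁻¹

lemma gam_eq_γ (x y : M) : gam T x y = γ T x y := by
  simp only [gam, aA, γ, e]; group

/-- `gam` commutes with every `a p` (no hypothesis on `1 - T` needed). -/
lemma gam_comm_aA (x y p : M) :
    gam T x y * aA T p = aA T p * gam T x y := by
  set u := T.symm x with hu
  set v := T.symm y with hv
  have hxu : x = T u := by rw [hu, T.apply_symm_apply]
  have hyv : y = T v := by rw [hv, T.apply_symm_apply]
  have hxy : x + y = T (u + v) := by rw [map_add, ← hxu, ← hyv]
  have h1 : (aA T (x + y))⁻¹ * aA T p * aA T (x + y)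
      = aA T (p + ((u - T u) + (v - T v)))
        * (aA T ((u - T u) + (v - T v)))⁻¹ := by
    rw [hxy]
    have := conj_aA T p (u + v)
    rw [this]
    rw [show u + v - T (u + v) = (u - T u) + (v - T v) by rw [map_add]; abel]
  have h2 : (aA T x * aA T y)⁻¹ * aA T p * (aA T x * aA T y)
      = aA T (p + ((u - T u) + (v - T v)))
        * (aA T ((u - T u) + (v - T v)))⁻¹ := by
    rw [hxu, hyv]; exact conj_aA2 T p u v
  have h3 : (aA T (x + y))⁻¹ * aA T p * aA T (x + y)
      = (aA T x * aA T y)⁻¹ * aA T p * (aA T x * aA T y) := by rw [h1, h2]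
  -- from g⁻¹ p g = h⁻¹ p h deduce (g h⁻¹) p = p (g h⁻¹)
  set g := aA T (x + y)
  set h := aA T x * aA T y
  show g * h⁻¹ * aA T p = aA T p * (g * h⁻¹)
  calc g * h⁻¹ * aA T p = g * (h⁻¹ * aA T p * h) * h⁻¹ := by group
    _ = g * (g⁻¹ * aA T p * g) * h⁻¹ := by rw [h3]
    _ = aA T p * (g * h⁻¹) := by group

end Proof12


section Proof12b

variable (T : M ≃+ M)

/-- Right additivity of `gam`, using surjectivity of `1 - T`. -/
lemma gam_right_add (hT : Function.Bijective fun x : M => x - T x) (x y z : M) :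
    gam T x (y + z) = gam T x y * gam T x z := by
  obtain ⟨u, hu⟩ := hT.2 z
  simp only at hu   -- hu : u - T u = z
  have hθ : ∀ q, (aA T (T u))⁻¹ * aA T q * aA T (T u)
      = aA T (q + z) * (aA T z)⁻¹ := by
    intro q
    rw [conj_aA, hu]
  -- gam commutes with aA (T u):
  have hc := gam_comm_aA T x y (T u)
  have hfix : (aA T (T u))⁻¹ * gam T x y * aA T (T u) = gam T x y := by
    rw [mul_assoc, hc]; group
  have hexp : (aA T (T u))⁻¹ * gam T x y * aA T (T u)
      = aA T (x + y + z) * (aA T (y + z))⁻¹ * aA T z * (aA T (x + z))⁻¹ := by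
    calc (aA T (T u))⁻¹ * gam T x y * aA T (T u)
        = ((aA T (T u))⁻¹ * aA T (x + y) * aA T (T u)) *
          (((aA T (T u))⁻¹ * aA T x * aA T (T u)) *
           ((aA T (T u))⁻¹ * aA T y * aA T (T u)))⁻¹ := by
          rw [gam]; group
      _ = (aA T (x + y + z) * (aA T z)⁻¹) *
          ((aA T (x + z) * (aA T z)⁻¹) * (aA T (y + z) * (aA T z)⁻¹))⁻¹ := by
          rw [hθ, hθ, hθ]
      _ = aA T (x + y + z) * (aA T (y + z))⁻¹ * aA T z * (aA T (x + z))⁻¹ := by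
          group
  have key : gam T x y
      = aA T (x + y + z) * (aA T (y + z))⁻¹ * aA T z * (aA T (x + z))⁻¹ := by
    rw [← hfix, hexp]
  -- now conclude
  have hxyz : x + (y + z) = x + y + z := by abel
  rw [key,
    show gam T x (y + z) = aA T (x + (y + z)) * (aA T x * aA T (y + z))⁻¹ from rfl,
    show gam T x z = aA T (x + z) * (aA T x * aA T z)⁻¹ from rfl, hxyz]
  group

lemma gam_I1 (x y : M) : gam T x y = gam T (T y) (x + y - T y) := by
  have h := arel T x y
  have hx : T y + (x + y - T y) = x + y := by abel
  rw [gam, gam, hx, h]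

lemma gam_split_one (y : M) : gam T (T y) (y - T y) = 1 := by
  have h : T y + (y - T y) = y := by abel
  rw [gam, h, ← asplit]
  group

lemma gam_tau (hT : Function.Bijective fun x : M => x - T x) (x y : M) :
    gam T x y = gam T (T y) x := by
  have h1 := gam_I1 T x y
  have h2 : x + y - T y = x + (y - T y) := by abel
  rw [h2] at h1
  rw [h1, gam_right_add T hT, gam_split_one, mul_one]

lemma gam_TT (hT : Function.Bijective fun x : M => x - T x) (x y : M) :
    gam T (T x) (T y) = gam T x y := by
  rw [gam_tau T hT x y, gam_tau T hT (T y) x]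

lemma conj_w_aA (p : M) : (e T 0)⁻¹ * aA T p * e T 0 = aA T (T p) := by
  rw [aA, aA]
  calc (e T 0)⁻¹ * ((e T 0)⁻¹ * e T p) * e T 0
      = (e T 0)⁻¹ * (e T (T p) * (e T 0)⁻¹) * e T 0 := by rw [conj_w]
    _ = (e T 0)⁻¹ * e T (T p) := by group

lemma gam_comm_w (hT : Function.Bijective fun x : M => x - T x) (x y : M) :
    gam T x y * e T 0 = e T 0 * gam T x y := by
  have h : (e T 0)⁻¹ * gam T x y * e T 0 = gam T (T x) (T y) := by
    calc (e T 0)⁻¹ * gam T x y * e T 0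
        = ((e T 0)⁻¹ * aA T (x + y) * e T 0) *
          (((e T 0)⁻¹ * aA T x * e T 0) * ((e T 0)⁻¹ * aA T y * e T 0))⁻¹ := by
          rw [gam]; group
      _ = aA T (T (x + y)) * (aA T (T x) * aA T (T y))⁻¹ := by
          rw [conj_w_aA, conj_w_aA, conj_w_aA]
      _ = gam T (T x) (T y) := by rw [gam, map_add]
  have h2 : (e T 0)⁻¹ * gam T x y * e T 0 = gam T x y := by
    rw [h, gam_TT T hT]
  calc gam T x y * e T 0 = e T 0 * ((e T 0)⁻¹ * gam T x y * e T 0) := by group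
    _ = e T 0 * gam T x y := by rw [h2]

lemma gam_comm_e (hT : Function.Bijective fun x : M => x - T x) (x y z : M) :
    gam T x y * e T z = e T z * gam T x y := by
  rw [e_eq_w_aA T z, ← mul_assoc, gam_comm_w T hT, mul_assoc, gam_comm_aA,
    ← mul_assoc]

lemma gam_mem_center (hT : Function.Bijective fun x : M => x - T x) (x y : M) :
    gam T x y ∈ Subgroup.center (Adj T) := by
  rw [Subgroup.mem_center_iff]
  intro g
  have hg : g ∈ Subgroup.centralizer {gam T x y} := by
    apply PresentedGroup.generated_by
    intro j
    rw [Subgroup.mem_centralizer_iff]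
    rintro h ⟨rfl⟩
    exact gam_comm_e T hT x y j
  have := Subgroup.mem_centralizer_iff.mp hg (gam T x y) rfl
  rw [this]

end Proof12b


section Proof12c

variable (T : M ≃+ M)

open scoped IsMulCommutative

/-! ### Bilinearity of `gam` and the central homomorphism `L` -/

lemma gam_left_add (hT : Function.Bijective fun x : M => x - T x) (x x' y : M) :
    gam T (x + x') y = gam T x y * gam T x' y := by
  rw [gam_tau T hT (x + x') y, gam_right_add T hT, ← gam_tau T hT x y,
    ← gam_tau T hT x' y]

/-- `[x ⊗ y] ↦ (gam x y)⁻¹` as an element of `Additive` of the center. -/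
noncomputable def gcen (hT : Function.Bijective fun x : M => x - T x) (x y : M) :
    Additive ↥(Subgroup.center (Adj T)) :=
  Additive.ofMul (⟨(gam T x y)⁻¹,
    (Subgroup.center (Adj T)).inv_mem (gam_mem_center T hT x y)⟩ :
      ↥(Subgroup.center (Adj T)))

lemma gcen_add_right (hT : Function.Bijective fun x : M => x - T x) (x y z : M) :
    gcen T hT x (y + z) = gcen T hT x y + gcen T hT x z := by
  apply congrArg Additive.ofMul
  apply Subtype.ext
  show (gam T x (y + z))⁻¹ = (gam T x y)⁻¹ * (gam T x z)⁻¹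
  rw [gam_right_add T hT, mul_inv_rev]
  have hc := Subgroup.mem_center_iff.mp
    ((Subgroup.center (Adj T)).inv_mem (gam_mem_center T hT x z)) (gam T x y)⁻¹
  rw [hc]

lemma gcen_add_left (hT : Function.Bijective fun x : M => x - T x) (x x' y : M) :
    gcen T hT (x + x') y = gcen T hT x y + gcen T hT x' y := by
  apply congrArg Additive.ofMul
  apply Subtype.ext
  show (gam T (x + x') y)⁻¹ = (gam T x y)⁻¹ * (gam T x' y)⁻¹
  rw [gam_left_add T hT, mul_inv_rev]
  have hc := Subgroup.mem_center_iff.mp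
    ((Subgroup.center (Adj T)).inv_mem (gam_mem_center T hT x' y)) (gam T x y)⁻¹
  rw [hc]

lemma gcen_tau (hT : Function.Bijective fun x : M => x - T x) (x y : M) :
    gcen T hT x y = gcen T hT (T y) x := by
  apply congrArg Additive.ofMul
  apply Subtype.ext
  show (gam T x y)⁻¹ = (gam T (T y) x)⁻¹
  rw [gam_tau T hT x y]

/-- second-slot additive hom. -/
noncomputable def gcenR (hT : Function.Bijective fun x : M => x - T x) (x : M) :
    M →+ Additive ↥(Subgroup.center (Adj T)) :=
  AddMonoidHom.mk' (fun y => gcen T hT x y) (gcen_add_right T hT x)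

lemma gcen_zsmul_right (hT : Function.Bijective fun x : M => x - T x)
    (c : ℤ) (x y : M) : gcen T hT x (c • y) = c • gcen T hT x y :=
  map_zsmul (gcenR T hT x) c y

lemma gcen_zsmul_left (hT : Function.Bijective fun x : M => x - T x)
    (c : ℤ) (x y : M) : gcen T hT (c • x) y = c • gcen T hT x y := by
  rw [gcen_tau T hT (c • x) y, gcen_zsmul_right, ← gcen_tau T hT x y]

noncomputable def Lbil (hT : Function.Bijective fun x : M => x - T x) :
    M →ₗ[ℤ] M →ₗ[ℤ] Additive ↥(Subgroup.center (Adj T)) :=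
  LinearMap.mk₂ ℤ (gcen T hT) (gcen_add_left T hT) (gcen_zsmul_left T hT)
    (gcen_add_right T hT) (gcen_zsmul_right T hT)

noncomputable def Lten (hT : Function.Bijective fun x : M => x - T x) :
    M ⊗[ℤ] M →ₗ[ℤ] Additive ↥(Subgroup.center (Adj T)) :=
  TensorProduct.lift (Lbil T hT)

lemma Lten_ker (hT : Function.Bijective fun x : M => x - T x) :
    LinearMap.range (LinearMap.id - τmap T) ≤ LinearMap.ker (Lten T hT) := by
  rintro v ⟨m, rfl⟩
  rw [LinearMap.mem_ker]
  have hz : (Lten T hT) ∘ₗ (LinearMap.id - τmap T) = 0 := by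
    apply TensorProduct.ext'
    intro x y
    show Lten T hT (x ⊗ₜ[ℤ] y - τmap T (x ⊗ₜ[ℤ] y)) = 0
    rw [τmap_tmul, map_sub]
    have h1 : Lten T hT (x ⊗ₜ[ℤ] y) = gcen T hT x y := rfl
    have h2 : Lten T hT (T y ⊗ₜ[ℤ] x) = gcen T hT (T y) x := rfl
    rw [h1, h2, ← gcen_tau T hT x y, sub_self]
  simpa using DFunLike.congr_fun hz m

noncomputable def LQ (hT : Function.Bijective fun x : M => x - T x) :
    S T →ₗ[ℤ] Additive ↥(Subgroup.center (Adj T)) :=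
  Submodule.liftQ _ (Lten T hT) (Lten_ker T hT)

/-- `L : S T → Adj T`, central, with `L [x ⊗ y] = (gam x y)⁻¹`. -/
noncomputable def LL (hT : Function.Bijective fun x : M => x - T x)
    (α : S T) : Adj T :=
  ((Additive.toMul (LQ T hT α)) : ↥(Subgroup.center (Adj T)))

lemma LL_cls (hT : Function.Bijective fun x : M => x - T x) (x y : M) :
    LL T hT (cls T x y) = (gam T x y)⁻¹ := by
  have : LQ T hT (cls T x y) = gcen T hT x y := by
    rw [LQ, cls, Submodule.liftQ_apply]
    rfl
  rw [LL, this]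
  rfl

lemma LL_zero (hT : Function.Bijective fun x : M => x - T x) :
    LL T hT 0 = 1 := by
  rw [LL, map_zero]
  rfl

lemma LL_add (hT : Function.Bijective fun x : M => x - T x) (α β : S T) :
    LL T hT (α + β) = LL T hT α * LL T hT β := by
  rw [LL, map_add]
  rfl

lemma LL_mem_center (hT : Function.Bijective fun x : M => x - T x) (α : S T) :
    LL T hT α ∈ Subgroup.center (Adj T) :=
  (Additive.toMul (LQ T hT α)).2

lemma LL_comm (hT : Function.Bijective fun x : M => x - T x) (α : S T)
    (g : Adj T) : g * LL T hT α = LL T hT α * g :=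
  Subgroup.mem_center_iff.mp (LL_mem_center T hT α) g

end Proof12c


section Proof12d

variable (T : M ≃+ M)

/-! ### Computations in `F(M,T)` and the homomorphism `φ₀` -/

lemma F_mul_def (g h : F T) : g * h =
    (g.1 + h.1, Tz T h.1 g.2.1 + h.2.1,
      g.2.2 + h.2.2 + cls T (Tz T h.1 g.2.1) h.2.1) := rfl

lemma F_one_def : (1 : F T) = ((0 : ℤ), (0 : M), (0 : S T)) := rfl

lemma F_inv_def (g : F T) : g⁻¹ =
    (-g.1, -(Tz T (-g.1) g.2.1), -g.2.2 + cls T g.2.1 g.2.1) := rfl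

lemma cls_neg_right (x y : M) : cls T x (-y) = -cls T x y := by
  simp only [cls, ← Submodule.Quotient.mk_neg, TensorProduct.tmul_neg]

lemma cls_Tleft (x y : M) : cls T (T y) x = cls T x y := by
  have h1 : cls T (T y) x = Submodule.Quotient.mk (τmap T (x ⊗ₜ[ℤ] y)) := rfl
  rw [h1, mk_τmap]; rfl

lemma Tz_neg_one (x : M) : Tz T (-1) x = T.symm x := by
  have h : ((-1 : ℤ) • T : AddAut M) = -T := by simp
  rw [Tz, h]; rfl

lemma F_conj (x y : M) :
    (((1 : ℤ), x, (0 : S T)) : F T)⁻¹ * ((1 : ℤ), y, (0 : S T)) *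
      ((1 : ℤ), x, (0 : S T)) = ((1 : ℤ), T y + x - T x, (0 : S T)) := by
  have h1 : (((1 : ℤ), x, (0 : S T)) : F T)⁻¹
      = ((-1 : ℤ), -T.symm x, cls T x x) := by
    rw [F_inv_def]
    refine Prod.ext rfl (Prod.ext ?_ ?_)
    · show -(Tz T (-1) x) = -T.symm x
      rw [Tz_neg_one]
    · show -0 + cls T x x = cls T x x
      rw [neg_zero, zero_add]
  rw [h1, F_mul_def]
  have h2 : ((((-1 : ℤ), -T.symm x, cls T x x) : F T).1 +
      (((1 : ℤ), y, (0 : S T)) : F T).1 : ℤ) = 0 := by norm_num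
  rw [F_mul_def]
  refine Prod.ext (by norm_num) (Prod.ext ?_ ?_)
  · show Tz T 1 (Tz T 1 (-T.symm x) + y) + x = T y + x - T x
    simp only [Tz_one, map_add, map_neg, T.apply_symm_apply]
    abel
  · show cls T x x + 0 + cls T (Tz T 1 (-T.symm x)) y + 0 +
        cls T (Tz T 1 (Tz T 1 (-T.symm x) + y)) x = 0
    simp only [Tz_one, map_add, map_neg, T.apply_symm_apply, cls_neg_left,
      cls_add_left, cls_Tleft, add_zero]
    abel

lemma phi0_rels : ∀ r ∈ rels T,
    FreeGroup.lift (fun x : M => (((1 : ℤ), x, (0 : S T)) : F T)) r = 1 := by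
  rintro r ⟨x, y, rfl⟩
  simp only [map_mul, map_inv, FreeGroup.lift_apply_of]
  rw [mul_inv_eq_one, ← F_conj T x y]

/-- The homomorphism `φ₀ : Adj T →* F T` with `φ₀ (e x) = (1, x, 0)`. -/
noncomputable def phi0 : Adj T →* F T :=
  PresentedGroup.toGroup (f := fun x : M => (((1 : ℤ), x, (0 : S T)) : F T))
    (phi0_rels T)

lemma phi0_e (x : M) : phi0 T (e T x) = ((1 : ℤ), x, (0 : S T)) :=
  PresentedGroup.toGroup.of _

lemma phi0_aA (x : M) : phi0 T (aA T x) = ((0 : ℤ), x, (0 : S T)) := by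
  rw [aA, map_mul, map_inv, phi0_e, phi0_e]
  rw [F_inv_def, F_mul_def]
  refine Prod.ext (by norm_num) (Prod.ext ?_ ?_)
  · show Tz T 1 (-(Tz T (-1) 0)) + x = x
    simp [Tz_neg_one, Tz_one]
  · show (-0 + cls T 0 0) + 0 + cls T (Tz T 1 (-(Tz T (-1) 0))) x = 0
    simp [Tz_neg_one, Tz_one, cls_zero_left]

lemma F_w_pow (k : ℤ) :
    (((1 : ℤ), (0 : M), (0 : S T)) : F T) ^ k = ((k : ℤ), (0 : M), (0 : S T)) := by
  have hinv : (((1 : ℤ), (0 : M), (0 : S T)) : F T)⁻¹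
      = ((-1 : ℤ), (0 : M), (0 : S T)) := by
    rw [F_inv_def]
    refine Prod.ext rfl (Prod.ext ?_ ?_)
    · show -(Tz T (-1) 0) = 0
      rw [Tz_neg_one, map_zero, neg_zero]
    · show -0 + cls T 0 0 = 0
      rw [neg_zero, zero_add, cls_zero_left]
  induction k using Int.induction_on with
  | zero => rw [zpow_zero, F_one_def]
  | succ i ih =>
      rw [zpow_add_one, ih, F_mul_def]
      refine Prod.ext rfl (Prod.ext ?_ ?_)
      · show Tz T 1 0 + 0 = 0
        rw [Tz_one, map_zero, add_zero]
      · show 0 + 0 + cls T (Tz T 1 0) 0 = 0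
        rw [Tz_one, map_zero, cls_zero_left]
        abel
  | pred i ih =>
      rw [zpow_sub_one, ih, hinv, F_mul_def]
      refine Prod.ext rfl (Prod.ext ?_ ?_)
      · show Tz T (-1) 0 + 0 = 0
        rw [Tz_neg_one, map_zero, add_zero]
      · show 0 + 0 + cls T (Tz T (-1) 0) 0 = 0
        rw [Tz_neg_one, map_zero, cls_zero_left]
        abel

lemma phi0_gam (x y : M) :
    phi0 T (gam T x y) = ((0 : ℤ), (0 : M), -cls T x y) := by
  have h1 : phi0 T (aA T x) * phi0 T (aA T y)
      = (((0 : ℤ), x + y, cls T x y) : F T) := by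
    rw [phi0_aA, phi0_aA, F_mul_def]
    refine Prod.ext rfl (Prod.ext ?_ ?_)
    · show Tz T 0 x + y = x + y
      rw [Tz_zero]
    · show 0 + 0 + cls T (Tz T 0 x) y = cls T x y
      rw [Tz_zero]
      abel
  have h2 : (((0 : ℤ), x + y, cls T x y) : F T)⁻¹
      = ((0 : ℤ), -(x + y), -cls T x y + cls T (x + y) (x + y)) := by
    rw [F_inv_def]
    refine Prod.ext (by norm_num) (Prod.ext ?_ ?_)
    · show -(Tz T (-0) (x + y)) = -(x + y)
      rw [neg_zero, Tz_zero]
    · rfl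
  rw [show gam T x y = aA T (x + y) * (aA T x * aA T y)⁻¹ from rfl, map_mul,
    map_inv, map_mul, h1, h2, phi0_aA, F_mul_def]
  refine Prod.ext (by norm_num) (Prod.ext ?_ ?_)
  · show Tz T 0 (x + y) + -(x + y) = 0
    rw [Tz_zero, add_neg_cancel]
  · show 0 + (-cls T x y + cls T (x + y) (x + y)) +
        cls T (Tz T 0 (x + y)) (-(x + y)) = -cls T x y
    rw [Tz_zero, cls_neg_right]
    abel

lemma phi0_LL (hT : Function.Bijective fun x : M => x - T x) (α : S T) :
    phi0 T (LL T hT α) = ((0 : ℤ), (0 : M), α) := by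
  obtain ⟨m, rfl⟩ := Submodule.Quotient.mk_surjective _ α
  induction m using TensorProduct.induction_on with
  | zero =>
      rw [Submodule.Quotient.mk_zero, LL_zero, map_one, F_one_def]
  | tmul x y =>
      rw [show (Submodule.Quotient.mk (x ⊗ₜ[ℤ] y) : S T) = cls T x y from rfl,
        LL_cls, map_inv, phi0_gam, F_inv_def]
      refine Prod.ext (by norm_num) (Prod.ext ?_ ?_)
      · show -(Tz T (-0) 0) = 0
        rw [neg_zero, Tz_zero, neg_zero]
      · show -(-cls T x y) + cls T 0 0 = cls T x y
        rw [neg_neg, cls_zero_left, add_zero]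
  | add u v ihu ihv =>
      rw [Submodule.Quotient.mk_add, LL_add, map_mul, ihu, ihv, F_mul_def]
      refine Prod.ext (by norm_num) (Prod.ext ?_ ?_)
      · show Tz T 0 0 + 0 = 0
        rw [Tz_zero, add_zero]
      · show Submodule.Quotient.mk u + Submodule.Quotient.mk v +
            cls T (Tz T 0 0) 0 = Submodule.Quotient.mk (u + v)
        rw [Tz_zero, cls_zero_left, Submodule.Quotient.mk_add, add_zero]

/-! ### The inverse map `ψ` -/

lemma aA_w (p : M) : aA T p * e T 0 = e T 0 * aA T (T p) := by
  rw [← conj_w_aA]; group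

lemma aA_w_inv (p : M) : aA T p * (e T 0)⁻¹ = (e T 0)⁻¹ * aA T (T.symm p) := by
  have h := conj_w_aA T (T.symm p)
  rw [T.apply_symm_apply] at h
  rw [← h]; group

lemma aA_zpow (m : ℤ) (x : M) :
    aA T x * e T 0 ^ m = e T 0 ^ m * aA T (Tz T m x) := by
  induction m using Int.induction_on with
  | zero =>
      rw [zpow_zero, mul_one, one_mul]
      rfl
  | succ i ih =>
      have hT1 : Tz T ((i : ℤ) + 1) x = T (Tz T i x) := by
        rw [add_comm, Tz_add, Tz_one]
      calc aA T x * e T 0 ^ ((i : ℤ) + 1)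
          = (aA T x * e T 0 ^ (i : ℤ)) * e T 0 := by
            rw [zpow_add_one, mul_assoc]
        _ = e T 0 ^ (i : ℤ) * (aA T (Tz T i x) * e T 0) := by
            rw [ih, mul_assoc]
        _ = e T 0 ^ (i : ℤ) * (e T 0 * aA T (T (Tz T i x))) := by rw [aA_w]
        _ = e T 0 ^ ((i : ℤ) + 1) * aA T (Tz T ((i : ℤ) + 1) x) := by
            rw [hT1, zpow_add_one]; group
  | pred i ih =>
      have hT1 : Tz T (-(i : ℤ) - 1) x = T.symm (Tz T (-(i : ℤ)) x) := by
        rw [show (-(i : ℤ) - 1) = (-1) + (-(i : ℤ)) by ring, Tz_add, Tz_neg_one]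
      calc aA T x * e T 0 ^ (-(i : ℤ) - 1)
          = (aA T x * e T 0 ^ (-(i : ℤ))) * (e T 0)⁻¹ := by
            rw [zpow_sub_one, mul_assoc]
        _ = e T 0 ^ (-(i : ℤ)) * (aA T (Tz T (-(i : ℤ)) x) * (e T 0)⁻¹) := by
            rw [ih, mul_assoc]
        _ = e T 0 ^ (-(i : ℤ)) * ((e T 0)⁻¹ * aA T (T.symm (Tz T (-(i : ℤ)) x))) := by
            rw [aA_w_inv]
        _ = e T 0 ^ (-(i : ℤ) - 1) * aA T (Tz T (-(i : ℤ) - 1) x) := by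
            rw [hT1, zpow_sub_one]; group

lemma aA_mul (u y : M) : aA T u * aA T y = (gam T u y)⁻¹ * aA T (u + y) := by
  rw [show gam T u y = aA T (u + y) * (aA T u * aA T y)⁻¹ from rfl]
  group

/-- The inverse map `ψ : F T → Adj T`. -/
noncomputable def psi (hT : Function.Bijective fun x : M => x - T x)
    (g : F T) : Adj T :=
  e T 0 ^ g.1 * aA T g.2.1 * LL T hT g.2.2

lemma psi_mul (hT : Function.Bijective fun x : M => x - T x) (g h : F T) :
    psi T hT (g * h) = psi T hT g * psi T hT h := by
  obtain ⟨k, x, α⟩ := g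
  obtain ⟨m, y, β⟩ := h
  show e T 0 ^ (k + m) * aA T (Tz T m x + y) *
      LL T hT (α + β + cls T (Tz T m x) y)
    = (e T 0 ^ k * aA T x * LL T hT α) * (e T 0 ^ m * aA T y * LL T hT β)
  symm
  calc (e T 0 ^ k * aA T x * LL T hT α) * (e T 0 ^ m * aA T y * LL T hT β)
      = (e T 0 ^ k * aA T x) * ((e T 0 ^ m * aA T y) * LL T hT α) *
          LL T hT β := by
        rw [LL_comm T hT α (e T 0 ^ m * aA T y)]; group
    _ = (e T 0 ^ k * (aA T x * e T 0 ^ m)) * aA T y *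
          (LL T hT α * LL T hT β) := by group
    _ = (e T 0 ^ k * (e T 0 ^ m * aA T (Tz T m x))) * aA T y *
          (LL T hT α * LL T hT β) := by rw [aA_zpow]
    _ = (e T 0 ^ k * e T 0 ^ m) * (aA T (Tz T m x) * aA T y) *
          LL T hT (α + β) := by rw [LL_add]; group
    _ = (e T 0 ^ k * e T 0 ^ m) * ((gam T (Tz T m x) y)⁻¹ *
          aA T (Tz T m x + y)) * LL T hT (α + β) := by rw [aA_mul]
    _ = (e T 0 ^ k * e T 0 ^ m) * (LL T hT (cls T (Tz T m x) y) *
          aA T (Tz T m x + y)) * LL T hT (α + β) := by rw [LL_cls]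
    _ = (e T 0 ^ k * e T 0 ^ m) * (aA T (Tz T m x + y) *
          LL T hT (cls T (Tz T m x) y)) * LL T hT (α + β) := by
        rw [LL_comm T hT (cls T (Tz T m x) y) (aA T (Tz T m x + y))]
    _ = e T 0 ^ (k + m) * aA T (Tz T m x + y) *
          (LL T hT (cls T (Tz T m x) y) * LL T hT (α + β)) := by
        rw [zpow_add]; group
    _ = e T 0 ^ (k + m) * aA T (Tz T m x + y) *
          LL T hT (α + β + cls T (Tz T m x) y) := by
        rw [← LL_add, show cls T (Tz T m x) y + (α + β)
          = α + β + cls T (Tz T m x) y from by abel]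

end Proof12d


/-- If `1 - T` is invertible, the homomorphism `φ : Adj(A(M,T)) → F(M,T)` with
`φ(e_x) = (1, x, 0)` is a group isomorphism; in particular `Adj(A(M,T)) ≅ F(M,T)`. -/
theorem statement12 (T : M ≃+ M) (hT : Function.Bijective fun x : M => x - T x) :
    (∀ φ : Adj T →* F T, (∀ x : M, φ (e T x) = (((1 : ℤ), x, (0 : S T)) : F T)) →
      Function.Bijective φ) ∧
    Nonempty (Adj T ≃* F T) := by
  have hbij : Function.Bijective (phi0 T) := by
    apply Function.bijective_iff_has_inverse.mpr
    refine ⟨psi T hT, ?_, ?_⟩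
    · -- left inverse
      have hcomp : (MonoidHom.mk' (psi T hT) (psi_mul T hT)).comp (phi0 T)
          = MonoidHom.id (Adj T) := by
        apply PresentedGroup.ext
        intro x
        show psi T hT (phi0 T (e T x)) = e T x
        rw [phi0_e]
        show e T 0 ^ (1 : ℤ) * aA T x * LL T hT 0 = e T x
        rw [zpow_one, LL_zero, mul_one, aA]
        group
      intro g
      exact DFunLike.congr_fun hcomp g
    · rintro ⟨k, x, α⟩
      show phi0 T (e T 0 ^ k * aA T x * LL T hT α) = (k, x, α)
      rw [map_mul, map_mul, map_zpow, phi0_e, F_w_pow, phi0_aA, phi0_LL]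
      have h1 : (((k : ℤ), (0 : M), (0 : S T)) : F T) * ((0 : ℤ), x, (0 : S T))
          = ((k : ℤ), x, (0 : S T)) := by
        rw [F_mul_def]
        refine Prod.ext (by ring) (Prod.ext ?_ ?_)
        · show Tz T 0 0 + x = x
          rw [Tz_zero, zero_add]
        · show 0 + 0 + cls T (Tz T 0 0) x = 0
          rw [Tz_zero, cls_zero_left]
          abel
      have h2 : (((k : ℤ), x, (0 : S T)) : F T) * ((0 : ℤ), (0 : M), α)
          = ((k : ℤ), x, α) := by
        rw [F_mul_def]
        refine Prod.ext (by ring) (Prod.ext ?_ ?_)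
        · show Tz T 0 x + 0 = x
          rw [Tz_zero, add_zero]
        · show 0 + α + cls T (Tz T 0 x) 0 = α
          rw [Tz_zero, cls_zero_right]
          abel
      rw [h1, h2]
  constructor
  · intro φ hφ
    have hphi : φ = phi0 T := by
      apply PresentedGroup.ext
      intro x
      rw [show (PresentedGroup.of x : Adj T) = e T x from rfl, hφ x, phi0_e]
    rw [hphi]
    exact hbij
  · exact ⟨MulEquiv.ofBijective (phi0 T) hbij⟩


end Clauwens
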